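/- With sequences α_j^± defined by α_{j,m}^± = (±1)^m ε_j^± and α_j^{±,0} = ε_j^±, and E_a(z) = X_{β_a}(z) where β_a = α_a^+ for 1 ≤ a ≤ l and β_a = α_{k−a+1}^- for l+1 ≤ a ≤ k = 2l, the operator products satisfy: E_a(z)E_b(w) = (z−w)^2 :E_a(z)E_b(w): if a = b; = (z+w) :E_a(z)E_b(w): if a+b = k+1; and = :E_a(z)E_b(w): otherwise. In particular all E_a(z) commute, E_a(z)^2 = 0, and E_a(z)E_{k+1−a}(−z) = 0. -/

import Mathlib

noncomputable section

/-- Coefficients of `exp(−Σ_{m≥1} c_m t^m / m)`. -/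
def gcoef (c : ℕ → ℂ) : ℕ → ℂ
  | 0 => 1
  | n + 1 => (-(1 : ℂ) / (n + 1)) * ∑ j ∈ Finset.range (n + 1), c (j + 1) * gcoef c (n - j)
decreasing_by exact Nat.lt_succ_of_le (Nat.sub_le n j)

/-- The contraction series `exp(−Σ_{m≥1} c_m t^m / m)` with `t = w/z`; for vertex operators
`g(z,w;α,β) = z^{⟨α_0,β^0⟩} · contrS c (w/z)`, `c m = ⟨α_m, β_{−m}⟩`. -/
def contrS (c : ℕ → ℂ) : PowerSeries ℂ := PowerSeries.mk (gcoef c)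

/-- The sequences `β_a` (for `k = 2l`, `a` zero-based): `β_{a,m} = ε_{a+1}^+` for
`a < l`, and `β_{a,m} = (−1)^m ε_{k−a}^-` for `a ≥ l` (paper indices `α_{k−a+1}^-`). -/
def bseq {V : Type*} [AddCommGroup V] [Module ℂ V] (l : ℕ) (εp εm : Fin l → V)
    (a : Fin (2 * l)) (m : ℤ) : V :=
  if h : (a : ℕ) < l then εp ⟨a, h⟩
  else ((-1 : ℂ) ^ m) • εm ⟨2 * l - 1 - a, by have := a.isLt; omega⟩


lemma gcoef_zero (c : ℕ → ℂ) : gcoef c 0 = 1 := by simp [gcoef]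

lemma gcoef_succ (c : ℕ → ℂ) (n : ℕ) :
    gcoef c (n+1) = (-(1:ℂ)/(n+1)) * ∑ j ∈ Finset.range (n+1), c (j+1) * gcoef c (n - j) := by
  rw [gcoef]

lemma contrS_zero (c : ℕ → ℂ) (hc : ∀ m, c m = 0) : contrS c = 1 := by
  ext n
  cases n with
  | zero => simp [contrS, gcoef_zero]
  | succ n => simp [contrS, gcoef_succ, hc]

lemma gcoef_negone (n : ℕ) : gcoef (fun m => (-1:ℂ)^m) n = if n ≤ 1 then 1 else 0 := by
  induction n using Nat.strong_induction_on with
  | _ n ih =>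
    match n with
    | 0 => simp [gcoef_zero]
    | 1 => norm_num [gcoef_succ, gcoef_zero]
    | (n+2) =>
      rw [gcoef_succ]
      have hsum : ∑ j ∈ Finset.range (n+2), (-1:ℂ)^(j+1) * gcoef (fun m => (-1:ℂ)^m) (n+1-j) = 0 := by
        have hterm : ∀ j ∈ Finset.range (n+2), (-1:ℂ)^(j+1) * gcoef (fun m => (-1:ℂ)^m) (n+1-j)
            = (if j = n+1 then (-1:ℂ)^(j+1) else 0) + (if j = n then (-1:ℂ)^(j+1) else 0) := by
          intro j hj
          simp only [Finset.mem_range] at hj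
          rw [ih (n+1-j) (by omega)]
          rcases eq_or_ne j (n+1) with rfl | h1
          · simp
          · rcases eq_or_ne j n with rfl | h2
            · simp
            · have hne : ¬ (n+1-j ≤ 1) := by omega
              simp [hne, h1, h2]
        rw [Finset.sum_congr rfl hterm, Finset.sum_add_distrib,
          Finset.sum_ite_eq' _ (n+1), Finset.sum_ite_eq' _ n]
        simp [Finset.mem_range, pow_succ]
      rw [hsum]
      simp

lemma gcoef_two (n : ℕ) : gcoef (fun _ => (2:ℂ)) n =
    if n = 0 then 1 else if n = 1 then -2 else if n = 2 then 1 else 0 := by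
  induction n using Nat.strong_induction_on with
  | _ n ih =>
    match n with
    | 0 => simp [gcoef_zero]
    | 1 => norm_num [gcoef_succ, gcoef_zero]
    | 2 =>
      rw [gcoef_succ]
      rw [Finset.sum_range_succ, Finset.sum_range_one]
      norm_num [gcoef_succ, gcoef_zero]
    | (n+3) =>
      rw [gcoef_succ]
      have hsum : ∑ j ∈ Finset.range (n+3), (2:ℂ) * gcoef (fun _ => (2:ℂ)) (n+2-j) = 0 := by
        have hterm : ∀ j ∈ Finset.range (n+3), (2:ℂ) * gcoef (fun _ => (2:ℂ)) (n+2-j)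
            = (if j = n+2 then (2:ℂ) else 0) + (if j = n+1 then (-4:ℂ) else 0)
              + (if j = n then (2:ℂ) else 0) := by
          intro j hj
          simp only [Finset.mem_range] at hj
          rw [ih (n+2-j) (by omega)]
          rcases eq_or_ne j (n+2) with h1 | h1
          · have e : n+2-j = 0 := by omega
            have h2 : j ≠ n+1 := by omega
            have h3 : j ≠ n := by omega
            rw [e]; norm_num [h1, h2, h3]
          · rcases eq_or_ne j (n+1) with h2 | h2
            · have e : n+2-j = 1 := by omega
              have h3 : j ≠ n := by omega
              rw [e]; norm_num [h1, h2, h3]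
            · rcases eq_or_ne j n with h3 | h3
              · have e : n+2-j = 2 := by omega
                rw [e]; norm_num [h1, h2, h3]
              · have e0 : n+2-j ≠ 0 := by omega
                have e1 : n+2-j ≠ 1 := by omega
                have e2 : n+2-j ≠ 2 := by omega
                simp [e0, e1, e2, h1, h2, h3]
        rw [Finset.sum_congr rfl hterm, Finset.sum_add_distrib, Finset.sum_add_distrib,
          Finset.sum_ite_eq' _ (n+2), Finset.sum_ite_eq' _ (n+1), Finset.sum_ite_eq' _ n]
        simp [Finset.mem_range]
        ring
      rw [hsum]
      simp

lemma coeff_one_sub_X_sq (n : ℕ) : (PowerSeries.coeff n) ((1 - PowerSeries.X : PowerSeries ℂ)^2) =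
    if n = 0 then 1 else if n = 1 then -2 else if n = 2 then 1 else 0 := by
  have h : (1 - PowerSeries.X : PowerSeries ℂ)^2
      = 1 - ((PowerSeries.C (2:ℂ))) * PowerSeries.X + PowerSeries.X^2 := by
    have : ((PowerSeries.C (2:ℂ))) = 2 := by simp [map_ofNat]
    rw [this]; ring
  rw [h]
  simp only [map_add, map_sub, PowerSeries.coeff_one, PowerSeries.coeff_C_mul,
    PowerSeries.coeff_X, PowerSeries.coeff_X_pow]
  rcases n with _|_|_|n <;> norm_num

lemma contrS_negone (c : ℕ → ℂ) (hc : ∀ m, c m = (-1:ℂ)^m) :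
    contrS c = 1 + PowerSeries.X := by
  have : c = fun m => (-1:ℂ)^m := funext hc
  subst this
  ext n
  simp only [contrS, PowerSeries.coeff_mk, gcoef_negone, map_add, PowerSeries.coeff_one,
    PowerSeries.coeff_X]
  rcases n with _|_|n <;> norm_num

lemma contrS_two (c : ℕ → ℂ) (hc : ∀ m, c m = 2) :
    contrS c = (1 - PowerSeries.X)^2 := by
  have : c = fun _ => (2:ℂ) := funext hc
  subst this
  ext n
  rw [coeff_one_sub_X_sq]
  simp [contrS, gcoef_two]

lemma neg_one_zpow_neg_natCast (m : ℕ) : ((-1:ℂ)) ^ (-(m:ℤ)) = (-1:ℂ)^m := by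
  rw [zpow_neg, zpow_natCast, ← inv_pow, inv_neg, inv_one]

lemma inv_neg_one_pow (m : ℕ) : (((-1:ℂ))^m)⁻¹ = (-1:ℂ)^m := by
  rw [← inv_pow, inv_neg, inv_one]
/-- With `α_{j,m}^± = (±1)^m ε_j^±`, `E_a(z) = X_{β_a}(z)` where
`β_a = α_a^+` for `a ≤ l` and `β_a = α_{k−a+1}^-` for `a > l` (`k = 2l`), the operator
products satisfy `E_a(z)E_b(w) = (z−w)^2 :E_aE_b:` if `a = b`, `= (z+w) :E_aE_b:` if
`a + b = k+1`, and `= :E_aE_b:` otherwise: the `z`-exponent `⟨β_{a,0}, β_b^0⟩` and the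
contraction series `exp(−Σ ⟨β_{a,m}, β_{b,−m}⟩ t^m/m)` equal `(2, (1−t)^2)`,
`(1, 1+t)`, `(0, 1)` respectively in the three cases.  (In particular all `E_a(z)`
commute, `E_a(z)^2 = 0` and `E_a(z)E_{k+1−a}(−z) = 0`.) -/
theorem vertex_ope_even_k (l : ℕ) (hl : 0 < l) (V : Type*) [AddCommGroup V] [Module ℂ V]
    (B : V →ₗ[ℂ] V →ₗ[ℂ] ℂ) (hBsymm : ∀ v w, B v w = B w v)
    (εp εm : Fin l → V)
    (hpp : ∀ a b, B (εp a) (εp b) = if a = b then 2 else 0)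
    (hmm : ∀ a b, B (εm a) (εm b) = if a = b then 2 else 0)
    (hpm : ∀ a b, B (εp a) (εm b) = if a = b then 1 else 0)
    (a b : Fin (2 * l)) :
    B (bseq l εp εm a 0) (bseq l εp εm b 0) =
      (if a = b then 2 else if (a : ℕ) + (b : ℕ) = 2 * l - 1 then 1 else 0 : ℂ) ∧
    contrS (fun m => B (bseq l εp εm a (m : ℤ)) (bseq l εp εm b (-(m : ℤ)))) =
      (if a = b then (1 - PowerSeries.X : PowerSeries ℂ) ^ 2
       else if (a : ℕ) + (b : ℕ) = 2 * l - 1 then 1 + PowerSeries.X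
       else 1) := by
  have ha := a.isLt
  have hb := b.isLt
  by_cases hal : (a : ℕ) < l <;> by_cases hbl : (b : ℕ) < l
  · -- both plus
    have hnk : ¬ ((a:ℕ) + (b:ℕ) = 2*l - 1) := by omega
    by_cases hab : a = b
    · subst hab
      simp only [bseq, dif_pos hal, if_pos rfl]
      refine ⟨by simp [hpp], contrS_two _ fun m => by simp [hpp]⟩
    · have hab' : (⟨(a:ℕ), hal⟩ : Fin l) ≠ ⟨(b:ℕ), hbl⟩ := by
        simp only [ne_eq, Fin.mk.injEq]
        exact fun h => hab (Fin.ext h)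
      simp only [bseq, dif_pos hal, dif_pos hbl, if_neg hab, if_neg hnk]
      exact ⟨by simp [hpp, hab'], contrS_zero _ fun m => by simp [hpp, hab']⟩
  · -- a plus, b minus
    have hab : a ≠ b := by intro h; rw [h] at hal; exact hbl hal
    by_cases hk : (a:ℕ) + (b:ℕ) = 2*l - 1
    · have hidx : (⟨(a:ℕ), hal⟩ : Fin l) = ⟨2*l-1-(b:ℕ), by omega⟩ := by
        simp only [Fin.mk.injEq]; omega
      simp only [bseq, dif_pos hal, dif_neg hbl, if_neg hab, if_pos hk]
      constructor
      · simp [hpm, hidx]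
      · refine contrS_negone _ fun m => ?_
        simp [hpm, hidx, zpow_neg, zpow_natCast, inv_neg_one_pow]
    · have hidx : (⟨(a:ℕ), hal⟩ : Fin l) ≠ ⟨2*l-1-(b:ℕ), by omega⟩ := by
        simp only [ne_eq, Fin.mk.injEq]; omega
      simp only [bseq, dif_pos hal, dif_neg hbl, if_neg hab, if_neg hk]
      constructor
      · simp [hpm, hidx]
      · exact contrS_zero _ fun m => by simp [hpm, hidx]
  · -- a minus, b plus
    have hab : a ≠ b := by intro h; rw [h] at hal; exact hal hbl
    have hBmp : ∀ i j, B (εm i) (εp j) = if j = i then 1 else 0 := by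
      intro i j; rw [hBsymm]; exact hpm j i
    by_cases hk : (a:ℕ) + (b:ℕ) = 2*l - 1
    · have hidx : (⟨(b:ℕ), hbl⟩ : Fin l) = ⟨2*l-1-(a:ℕ), by omega⟩ := by
        simp only [Fin.mk.injEq]; omega
      simp only [bseq, dif_neg hal, dif_pos hbl, if_neg hab, if_pos hk]
      constructor
      · simp [hBmp, hidx]
      · refine contrS_negone _ fun m => ?_
        simp [hBmp, hidx, zpow_natCast]
    · have hidx : (⟨(b:ℕ), hbl⟩ : Fin l) ≠ ⟨2*l-1-(a:ℕ), by omega⟩ := by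
        simp only [ne_eq, Fin.mk.injEq]; omega
      simp only [bseq, dif_neg hal, dif_pos hbl, if_neg hab, if_neg hk]
      constructor
      · simp [hBmp, hidx]
      · exact contrS_zero _ fun m => by simp [hBmp, hidx]
  · -- both minus
    have hnk : ¬ ((a:ℕ) + (b:ℕ) = 2*l - 1) := by omega
    have hpow : ∀ m : ℕ, ((-1:ℂ)^(m:ℤ)) * ((-1:ℂ)^(-(m:ℤ))) = 1 := by
      intro m
      rw [zpow_natCast, neg_one_zpow_neg_natCast, ← pow_add]
      exact Even.neg_one_pow ⟨m, rfl⟩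
    by_cases hab : a = b
    · subst hab
      simp only [bseq, dif_neg hal, if_pos rfl]
      constructor
      · simp only [map_smul, LinearMap.smul_apply, smul_eq_mul, hmm, if_pos rfl]
        norm_num
      · refine contrS_two _ fun m => ?_
        simp only [map_smul, LinearMap.smul_apply, smul_eq_mul, hmm, if_pos rfl,
          zpow_neg, zpow_natCast, inv_neg_one_pow, if_true]
        rw [← mul_assoc, ← pow_add, Even.neg_one_pow ⟨m, rfl⟩, one_mul]
    · have hab' : (⟨2*l-1-(a:ℕ), by omega⟩ : Fin l) ≠ ⟨2*l-1-(b:ℕ), by omega⟩ := by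
        simp only [ne_eq, Fin.mk.injEq]
        intro h; exact hab (Fin.ext (by omega))
      simp only [bseq, dif_neg hal, dif_neg hbl, if_neg hab, if_neg hnk]
      constructor
      · simp [hmm, hab']
      · exact contrS_zero _ fun m => by simp [hmm, hab']
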